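/- LEF does not imply SEF: in the instance with 2 agents and 100 items i_1 ≻ i_2 ≻ … ≻ i_100 (both agents have this same preference order), and random priority Σ uniform over the two possible priorities (each with probability 1/2), the random assignment that gives agent 1 probability 1/2 each of items i_1 and i_100, and gives agent 2 probability 1/2 each of items i_99 and i_100, satisfies LEF but does not satisfy SEF. -/

import Mathlib

open Finset

/-- `X` stochastically dominates `Y` under the ranking `π` (a bijection from items to ranks):
for every rank `t`, the cumulative probability of the `t` most-preferred items is at least
as large under `X` as under `Y`. -/
def SD {m : ℕ} (π : Equiv.Perm (Fin m)) (X Y : Fin m → ℝ) : Prop :=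
  ∀ t : Fin m, ∑ r ∈ Finset.Iic t, Y (π.symm r) ≤ ∑ r ∈ Finset.Iic t, X (π.symm r)

/-- A random assignment: an `n × m` matrix of nonnegative reals, each row summing to `1`
and each column summing to at most `1`. -/
def IsRandomAssignment {n m : ℕ} (P : Fin n → Fin m → ℝ) : Prop :=
  (∀ i j, 0 ≤ P i j) ∧ (∀ i, ∑ j, P i j = 1) ∧ (∀ j, ∑ i, P i j ≤ 1)

/-- A random priority: a (finitely supported) probability distribution over simple priorities
(bijections from agents to ranks). -/
def IsRandomPriority {n : ℕ} (ρ : Equiv.Perm (Fin n) → ℝ) : Prop :=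
  (∀ σ, 0 ≤ ρ σ) ∧ (∑ σ, ρ σ = 1)

/-- A lottery: a probability distribution over simple assignments (injective maps from
agents to items). -/
def IsLottery {n m : ℕ} (L : (Fin n → Fin m) → ℝ) : Prop :=
  (∀ f, 0 ≤ L f) ∧ (∑ f, L f = 1) ∧ (∀ f, L f ≠ 0 → Function.Injective f)

/-- The random assignment induced by a lottery: `p i j = Pr_{f ∼ L}[f i = j]`. -/
def induced {n m : ℕ} (L : (Fin n → Fin m) → ℝ) : Fin n → Fin m → ℝ :=
  fun i j => ∑ f ∈ Finset.univ.filter (fun f => f i = j), L f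

/-- `rankDist ρ i r = Pr_{σ ∼ Σ}[σ i = r]`, agent `i`'s rank distribution. -/
def rankDist {n : ℕ} (ρ : Equiv.Perm (Fin n) → ℝ) (i r : Fin n) : ℝ :=
  ∑ σ ∈ Finset.univ.filter (fun σ => σ i = r), ρ σ

/-- Ordinal efficiency: no other random assignment stochastically dominates `P`
for every agent. -/
def OE {n m : ℕ} (π : Fin n → Equiv.Perm (Fin m)) (P : Fin n → Fin m → ℝ) : Prop :=
  ¬ ∃ Q : Fin n → Fin m → ℝ, IsRandomAssignment Q ∧ Q ≠ P ∧ ∀ i, SD (π i) (Q i) (P i)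

/-- Stochastic envy-freeness: whenever `i`'s rank distribution (cumulatively)
stochastically dominates `j`'s, agent `i`'s allocation stochastically dominates `j`'s
under `i`'s preferences. -/
def SEF {n m : ℕ} (π : Fin n → Equiv.Perm (Fin m)) (ρ : Equiv.Perm (Fin n) → ℝ)
    (P : Fin n → Fin m → ℝ) : Prop :=
  ∀ i j : Fin n,
    (∀ t : Fin n, ∑ r ∈ Finset.Iic t, rankDist ρ j r ≤ ∑ r ∈ Finset.Iic t, rankDist ρ i r) →
    SD (π i) (P i) (P j)

/-- `Pr_{σ ∼ Σ}[σ i < σ j]`: the probability that agent `i` has higher priority than `j`. -/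
def prHigher {n : ℕ} (ρ : Equiv.Perm (Fin n) → ℝ) (i j : Fin n) : ℝ :=
  ∑ σ ∈ Finset.univ.filter (fun σ => σ i < σ j), ρ σ

/-- `Pr_{f ∼ L}[f i ≻_i f j]`: the probability that agent `i` prefers her own item to `j`'s. -/
def prPrefers {n m : ℕ} (π : Fin n → Equiv.Perm (Fin m)) (L : (Fin n → Fin m) → ℝ)
    (i j : Fin n) : ℝ :=
  ∑ f ∈ Finset.univ.filter (fun f => π i (f i) < π i (f j)), L f

/-- Likelihood envy-freeness: some lottery inducing `P` satisfies
`Pr[σ i < σ j] ≤ Pr[f i ≻_i f j]` for all agents `i`, `j`. -/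
def LEF {n m : ℕ} (π : Fin n → Equiv.Perm (Fin m)) (ρ : Equiv.Perm (Fin n) → ℝ)
    (P : Fin n → Fin m → ℝ) : Prop :=
  ∃ L : (Fin n → Fin m) → ℝ, IsLottery L ∧ induced L = P ∧
    ∀ i j : Fin n, prHigher ρ i j ≤ prPrefers π L i j

/-- 1-LEF: some lottery inducing `P` satisfies: whenever `i` has higher priority than `j`
with probability `1`, agent `i` prefers her item to `j`'s with probability `1`. -/
def OneLEF {n m : ℕ} (π : Fin n → Equiv.Perm (Fin m)) (ρ : Equiv.Perm (Fin n) → ℝ)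
    (P : Fin n → Fin m → ℝ) : Prop :=
  ∃ L : (Fin n → Fin m) → ℝ, IsLottery L ∧ induced L = P ∧
    ∀ i j : Fin n, i ≠ j → prHigher ρ i j = 1 → prPrefers π L i j = 1

/-- The baseline allocation of agent `i`: she gets her `r`-th preferred item with
probability `Pr[σ i = r]` (ranks beyond `n` get probability `0`). -/
def baseline {n m : ℕ} (π : Fin n → Equiv.Perm (Fin m)) (ρ : Equiv.Perm (Fin n) → ℝ)
    (i : Fin n) (j : Fin m) : ℝ :=
  ∑ σ ∈ Finset.univ.filter (fun σ => (σ i : ℕ) = (π i j : ℕ)), ρ σ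

/-- Ranked proportionality: every agent's allocation stochastically dominates
her baseline allocation. -/
def PROP {n m : ℕ} (π : Fin n → Equiv.Perm (Fin m)) (ρ : Equiv.Perm (Fin n) → ℝ)
    (P : Fin n → Fin m → ℝ) : Prop :=
  ∀ i : Fin n, SD (π i) (P i) (baseline π ρ i)

/-- Pareto efficiency of a simple assignment: no injective assignment makes every agent
weakly better off and some agent strictly better off. -/
def ParetoEff {n m : ℕ} (π : Fin n → Equiv.Perm (Fin m)) (f : Fin n → Fin m) : Prop :=
  ¬ ∃ g : Fin n → Fin m, Function.Injective g ∧
      (∀ i, g i = f i ∨ π i (g i) < π i (f i)) ∧ (∃ i, π i (g i) < π i (f i))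

/-- Envy-freeness of a simple assignment with respect to a simple priority. -/
def EnvyFree {n m : ℕ} (π : Fin n → Equiv.Perm (Fin m)) (σ : Equiv.Perm (Fin n))
    (f : Fin n → Fin m) : Prop :=
  ∀ i j : Fin n, σ i < σ j → π i (f i) < π i (f j)

noncomputable def Lott : (Fin 2 → Fin 100) → ℝ :=
  fun f => (if f = ![0,99] then (1:ℝ)/2 else 0) + (if f = ![99,98] then (1:ℝ)/2 else 0)

lemma Lott_sum (S : Finset (Fin 2 → Fin 100)) :
    ∑ f ∈ S, Lott f =
      (if ![0,99] ∈ S then (1:ℝ)/2 else 0) + (if ![99,98] ∈ S then (1:ℝ)/2 else 0) := by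
  unfold Lott
  rw [Finset.sum_add_distrib, Finset.sum_ite_eq' S _ (fun _ => (1:ℝ)/2),
    Finset.sum_ite_eq' S _ (fun _ => (1:ℝ)/2)]

lemma Lott_isLottery : IsLottery Lott := by
  refine ⟨fun f => by unfold Lott; positivity, ?_, ?_⟩
  · rw [Lott_sum]; norm_num
  · intro f hf
    unfold Lott at hf
    rcases eq_or_ne f ![0,99] with h | h
    · subst h; decide
    rcases eq_or_ne f ![99,98] with h2 | h2
    · subst h2; decide
    simp [h, h2] at hf

lemma Lott_induced : induced Lott =
    (fun i j => if i = 0 then (if j = 0 ∨ j = 99 then (1 : ℝ) / 2 else 0)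
                else (if j = 98 ∨ j = 99 then (1 : ℝ) / 2 else 0)) := by
  funext i j
  unfold induced
  rw [Lott_sum]
  simp only [Finset.mem_filter, Finset.mem_univ, true_and]
  fin_cases i <;> simp only [Matrix.cons_val_zero, Matrix.cons_val_one, Matrix.head_cons] <;>
    [skip; simp only [show (⟨1,by norm_num⟩ : Fin 2) ≠ 0 by decide, if_neg, if_false]]
  · rcases eq_or_ne j 0 with h | h
    · subst h; norm_num; decide
    rcases eq_or_ne j 99 with h2 | h2
    · subst h2; norm_num; decide
    simp [h, h2, Ne.symm h, Ne.symm h2]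
  · rcases eq_or_ne j 98 with h | h
    · subst h; norm_num; decide
    rcases eq_or_ne j 99 with h2 | h2
    · subst h2; norm_num; decide
    simp [h, h2, Ne.symm h, Ne.symm h2]
lemma Lott_pr (i j : Fin 2) :
    prHigher (fun _ : Equiv.Perm (Fin 2) => (1:ℝ)/2) i j ≤
      prPrefers (fun _ : Fin 2 => Equiv.refl (Fin 100)) Lott i j := by
  unfold prHigher prPrefers
  rw [Lott_sum, Finset.sum_const]
  simp only [Finset.mem_filter, Finset.mem_univ, true_and, Equiv.refl_apply]
  fin_cases i <;> fin_cases j <;> norm_num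
  · rw [show #(filter (fun σ : Equiv.Perm (Fin 2) => σ 0 < σ 1) univ) = 1 from by decide]
    split_ifs with ha hb <;> norm_num
    erw [Finset.mem_filter] at ha; exact ha ⟨by simp only [Finset.mem_univ], by simp⟩
  · rw [show #(filter (fun σ : Equiv.Perm (Fin 2) => σ 1 < σ 0) univ) = 1 from by decide]
    split_ifs with ha hb <;> norm_num
    rename_i hb
    erw [Finset.mem_filter] at hb; exact hb ⟨by simp only [Finset.mem_univ], by simp⟩

lemma card_rank (i r : Fin 2) :
    #(filter (fun σ : Equiv.Perm (Fin 2) => σ i = r) univ) = 1 := by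
  fin_cases i <;> fin_cases r <;> decide

lemma rankDist_const (i r : Fin 2) :
    rankDist (fun _ : Equiv.Perm (Fin 2) => (1:ℝ)/2) i r = 1/2 := by
  unfold rankDist; rw [Finset.sum_const, card_rank]; norm_num


/-- **Example (LEF does not imply SEF).** Two agents, `100` items `0 ≻ 1 ≻ ⋯ ≻ 99` (same
preferences for both agents), uniform random priority. Agent `0` gets items `0` and `99`
with probability `1/2` each; agent `1` gets items `98` and `99` with probability `1/2`
each. This random assignment satisfies LEF but not SEF. -/
theorem LEF_not_SEF_example :
    LEF (fun _ : Fin 2 => Equiv.refl (Fin 100))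
        (fun _ : Equiv.Perm (Fin 2) => (1 : ℝ) / 2)
        (fun i j => if i = 0 then (if j = 0 ∨ j = 99 then (1 : ℝ) / 2 else 0)
                    else (if j = 98 ∨ j = 99 then (1 : ℝ) / 2 else 0)) ∧
    ¬ SEF (fun _ : Fin 2 => Equiv.refl (Fin 100))
        (fun _ : Equiv.Perm (Fin 2) => (1 : ℝ) / 2)
        (fun i j => if i = 0 then (if j = 0 ∨ j = 99 then (1 : ℝ) / 2 else 0)
                    else (if j = 98 ∨ j = 99 then (1 : ℝ) / 2 else 0)) := by
  constructor
  · exact ⟨Lott, Lott_isLottery, Lott_induced, fun i j => Lott_pr i j⟩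
  · intro h
    have h1 := h 1 0 (fun t => le_of_eq (Finset.sum_congr rfl
      (fun r _ => by rw [rankDist_const, rankDist_const])))
    have h0 := h1 (0 : Fin 100)
    rw [show Finset.Iic (0:Fin 100) = {0} from by decide, Finset.sum_singleton,
      Finset.sum_singleton] at h0
    simp only [Equiv.refl_symm, Equiv.refl_apply] at h0
    beta_reduce at h0
    norm_num [show ¬(1:Fin 2)=0 from by decide, show ((0:Fin 100) = 0 ∨ (0:Fin 100) = 99) from Or.inl rfl, show ¬((0:Fin 100) = 98 ∨ (0:Fin 100) = 99) from by decide] at h0
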